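/- For n ≥ 4, define functionals on ℝ^n by f_i(x) = x_i for 1 ≤ i ≤ n, f_{n+1}(x) = Σᵢ x_i, f_{n+2}(x) = (Σᵢ i·x_i)/n, and let ‖·‖ be the norm ‖x‖ = (Σ_{i=1}^{n+2} |f_i(x)|^{2p})^{1/(2p)} with p = ⌈(n+2)/2⌉, and let ‖·‖* be its dual norm. Then for every choice of indices 1 ≤ j < k < l ≤ n+2 and 1 ≤ i ≤ n+2 with i ∉ {j,k,l}, the dual-norm distance from f_i to span{f_j, f_k, f_l} is at least 1/(2n). -/

import Mathlib

open Finset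

/-- The system of `n+2` functionals on `ℝⁿ`: `fᵢ(x) = xᵢ` for `1 ≤ i ≤ n`,
`f_{n+1}(x) = ∑ xᵢ`, `f_{n+2}(x) = (∑ i·xᵢ)/n`. -/
noncomputable def cornerFunctional (n : ℕ) (i : Fin (n + 2)) (x : Fin n → ℝ) : ℝ :=
  if h : (i : ℕ) < n then x ⟨i, h⟩
  else if (i : ℕ) = n then ∑ s, x s
  else (∑ s : Fin n, (((s : ℕ) : ℝ) + 1) * x s) / n

/-- The norm `‖x‖ = (∑ᵢ |fᵢ(x)|^{2p})^{1/(2p)}` built from the above functionals,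
with `p = ⌈(n+2)/2⌉`. -/
noncomputable def cornerNorm (n : ℕ) (x : Fin n → ℝ) : ℝ :=
  (∑ i, |cornerFunctional n i x| ^ (2 * ((n + 3) / 2 : ℕ))) ^
    ((1 : ℝ) / (2 * ((n + 3) / 2 : ℕ)))

lemma exists_avoid (n : ℕ) (hn : 4 ≤ n) (x y z : ℕ) :
    ∃ r : Fin n, (r : ℕ) ≠ x ∧ (r : ℕ) ≠ y ∧ (r : ℕ) ≠ z := by
  have hcard : ({x, y, z} : Finset ℕ).card ≤ 3 := by
    apply le_trans (Finset.card_insert_le _ _)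
    have := Finset.card_insert_le y ({z} : Finset ℕ)
    simp at this ⊢
    omega
  have hsd : 0 < ((Finset.range 4) \ {x, y, z}).card := by
    have h := Finset.le_card_sdiff ({x,y,z} : Finset ℕ) (Finset.range 4)
    rw [Finset.card_range] at h
    omega
  obtain ⟨r, hr⟩ := Finset.card_pos.mp hsd
  simp only [Finset.mem_sdiff, Finset.mem_range, Finset.mem_insert, Finset.mem_singleton] at hr
  push_neg at hr
  exact ⟨⟨r, by omega⟩, hr.2⟩

lemma one_le_abs_sub (a b : ℕ) (h : a ≠ b) : 1 ≤ |(a : ℝ) - b| := by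
  rcases Nat.lt_or_ge a b with h' | h'
  · have h1 : (a : ℝ) + 1 ≤ b := by exact_mod_cast h'
    rw [abs_sub_comm, abs_of_nonneg (by linarith)]
    linarith
  · have hb : b < a := lt_of_le_of_ne h' (Ne.symm h)
    have h1 : (b : ℝ) + 1 ≤ a := by exact_mod_cast hb
    rw [abs_of_nonneg (by linarith)]
    linarith

lemma abs_sub_le_of_lt {a b n : ℕ} (ha : a < n) (hb : b < n) : |(a : ℝ) - b| ≤ n := by
  have h1 : (a:ℝ) ≤ n := by exact_mod_cast ha.le
  have h2 : (b:ℝ) ≤ n := by exact_mod_cast hb.le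
  have h3 : (0:ℝ) ≤ a := by positivity
  have h4 : (0:ℝ) ≤ b := by positivity
  rw [abs_sub_le_iff]; constructor <;> linarith

noncomputable def wv (n : ℕ) (r1 r2 r3 : Fin n) (c1 c2 c3 : ℝ) : Fin n → ℝ :=
  fun s => (if s = r1 then c1 else 0) + (if s = r2 then c2 else 0) + (if s = r3 then c3 else 0)

lemma wv_sum (n : ℕ) (r1 r2 r3 : Fin n) (c1 c2 c3 : ℝ) :
    ∑ s, wv n r1 r2 r3 c1 c2 c3 s = c1 + c2 + c3 := by
  simp [wv, Finset.sum_add_distrib, Finset.sum_ite_eq']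

lemma wv_wsum (n : ℕ) (r1 r2 r3 : Fin n) (c1 c2 c3 : ℝ) :
    ∑ s : Fin n, (((s : ℕ) : ℝ) + 1) * wv n r1 r2 r3 c1 c2 c3 s
      = (((r1 : ℕ) : ℝ) + 1) * c1 + (((r2 : ℕ) : ℝ) + 1) * c2 + (((r3 : ℕ) : ℝ) + 1) * c3 := by
  simp only [wv, mul_add, mul_ite, mul_zero, Finset.sum_add_distrib, Finset.sum_ite_eq']
  simp

lemma wv_coord (n : ℕ) (r1 r2 r3 : Fin n) (c1 c2 c3 : ℝ) (t : Fin (n+2)) (h : (t : ℕ) < n) :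
    cornerFunctional n t (wv n r1 r2 r3 c1 c2 c3)
      = (if (t : ℕ) = (r1:ℕ) then c1 else 0) + (if (t : ℕ) = (r2:ℕ) then c2 else 0) +
        (if (t : ℕ) = (r3:ℕ) then c3 else 0) := by
  simp only [cornerFunctional, dif_pos h, wv]
  congr 2 <;> simp [Fin.ext_iff]

lemma wv_S (n : ℕ) (r1 r2 r3 : Fin n) (c1 c2 c3 : ℝ) (t : Fin (n+2)) (h : (t : ℕ) = n) :
    cornerFunctional n t (wv n r1 r2 r3 c1 c2 c3) = c1 + c2 + c3 := by
  rw [cornerFunctional, dif_neg (by omega), if_pos h, wv_sum]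

lemma wv_T (n : ℕ) (r1 r2 r3 : Fin n) (c1 c2 c3 : ℝ) (t : Fin (n+2)) (h : (t : ℕ) = n + 1) :
    cornerFunctional n t (wv n r1 r2 r3 c1 c2 c3)
      = ((((r1 : ℕ) : ℝ) + 1) * c1 + (((r2 : ℕ) : ℝ) + 1) * c2 + (((r3 : ℕ) : ℝ) + 1) * c3) / n := by
  rw [cornerFunctional, dif_neg (by omega), if_neg (by omega), wv_wsum]

lemma abs_ite3_le {x1 x2 x3 : ℕ} (h12 : x1 ≠ x2) (h13 : x1 ≠ x3) (h23 : x2 ≠ x3)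
    {c1 c2 c3 B : ℝ} (h1 : |c1| ≤ B) (h2 : |c2| ≤ B) (h3 : |c3| ≤ B) (hB : 0 ≤ B) (t : ℕ) :
    |(if t = x1 then c1 else 0) + (if t = x2 then c2 else 0) + (if t = x3 then c3 else 0)| ≤ B := by
  split_ifs <;> simp_all

lemma cornerFunctional_smul (n : ℕ) (t : Fin (n+2)) (c : ℝ) (x : Fin n → ℝ) :
    cornerFunctional n t (fun s => c * x s) = c * cornerFunctional n t x := by
  unfold cornerFunctional
  split_ifs with h h'
  · rfl
  · rw [Finset.mul_sum]
  · have h3 : (∑ s : Fin n, (((s:ℕ):ℝ) + 1) * (c * x s)) = c * ∑ s : Fin n, (((s:ℕ):ℝ) + 1) * x s := by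
      rw [Finset.mul_sum]
      exact Finset.sum_congr rfl fun s _ => by ring
    simp only []
    rw [h3, mul_div_assoc]

lemma wv_bound (n : ℕ) (hn : 4 ≤ n) (r1 r2 r3 : Fin n)
    (h12 : (r1:ℕ) ≠ (r2:ℕ)) (h13 : (r1:ℕ) ≠ (r3:ℕ)) (h23 : (r2:ℕ) ≠ (r3:ℕ))
    (c1 c2 c3 : ℝ) (hb1 : |c1| ≤ n) (hb2 : |c2| ≤ n) (hb3 : |c3| ≤ n)
    (hS : |c1 + c2 + c3| ≤ n)
    (hT : |(((r1:ℕ):ℝ)+1)*c1 + (((r2:ℕ):ℝ)+1)*c2 + (((r3:ℕ):ℝ)+1)*c3| ≤ (n:ℝ) * n) :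
    ∀ t : Fin (n+2), |cornerFunctional n t (wv n r1 r2 r3 c1 c2 c3)| ≤ n := by
  intro t
  have hn0 : (0:ℝ) < n := by positivity
  by_cases ht : (t:ℕ) < n
  · rw [wv_coord _ _ _ _ _ _ _ _ ht]
    exact abs_ite3_le h12 h13 h23 hb1 hb2 hb3 hn0.le _
  · by_cases ht2 : (t:ℕ) = n
    · rw [wv_S _ _ _ _ _ _ _ _ ht2]; exact hS
    · rw [wv_T _ _ _ _ _ _ _ _ (by omega)]
      rw [abs_div, abs_of_nonneg hn0.le, div_le_iff₀ hn0]
      exact hT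

lemma witness (n : ℕ) (hn : 4 ≤ n) (j k l i : Fin (n+2)) (hjk : j < k) (hkl : k < l)
    (hij : i ≠ j) (hik : i ≠ k) (hil : i ≠ l) :
    ∃ v : Fin n → ℝ, cornerFunctional n j v = 0 ∧ cornerFunctional n k v = 0 ∧
      cornerFunctional n l v = 0 ∧ (∀ t, |cornerFunctional n t v| ≤ n) ∧
      1 ≤ |cornerFunctional n i v| := by
  have hjk' : (j:ℕ) < (k:ℕ) := hjk
  have hkl' : (k:ℕ) < (l:ℕ) := hkl
  have hij' : (i:ℕ) ≠ (j:ℕ) := fun h => hij (Fin.ext h)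
  have hik' : (i:ℕ) ≠ (k:ℕ) := fun h => hik (Fin.ext h)
  have hil' : (i:ℕ) ≠ (l:ℕ) := fun h => hil (Fin.ext h)
  have hl2 : (l:ℕ) < n + 2 := l.isLt
  have hi2 : (i:ℕ) < n + 2 := i.isLt
  have hjn : (j:ℕ) < n := by omega
  have hn0 : (0:ℝ) < n := by positivity
  have hn1 : (1:ℝ) ≤ n := by exact_mod_cast Nat.one_le_iff_ne_zero.mpr (by omega)
  by_cases hl1 : (l:ℕ) < n
  · -- Case 1: all three constraints are coordinates
    have hkn : (k:ℕ) < n := by omega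
    obtain ⟨r1, ⟨h1j, h1k, h1l⟩, h1i⟩ :
        ∃ r1 : Fin n, ((r1:ℕ) ≠ (j:ℕ) ∧ (r1:ℕ) ≠ (k:ℕ) ∧ (r1:ℕ) ≠ (l:ℕ)) ∧
          ((i:ℕ) < n → (r1:ℕ) = (i:ℕ)) := by
      by_cases hi1 : (i:ℕ) < n
      · exact ⟨⟨(i:ℕ), hi1⟩, ⟨hij', hik', hil'⟩, fun _ => rfl⟩
      · obtain ⟨r, ha, hb, hc⟩ := exists_avoid n hn j k l
        exact ⟨r, ⟨ha, hb, hc⟩, fun h' => absurd h' hi1⟩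
    obtain ⟨r2, h21, -, -⟩ := exists_avoid n hn r1 r1 r1
    obtain ⟨r3, h31, h32, -⟩ := exists_avoid n hn r1 r2 r2
    have hr1n : (r1:ℕ) < n := r1.isLt
    refine ⟨wv n r1 r2 r3 (n:ℝ) 0 0, ?_, ?_, ?_, ?_, ?_⟩
    · rw [wv_coord _ _ _ _ _ _ _ j hjn]; simp [Ne.symm h1j]
    · rw [wv_coord _ _ _ _ _ _ _ k hkn]; simp [Ne.symm h1k]
    · rw [wv_coord _ _ _ _ _ _ _ l hl1]; simp [Ne.symm h1l]
    · apply wv_bound n hn r1 r2 r3 (Ne.symm h21) (Ne.symm h31) (Ne.symm h32)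
      · rw [abs_of_nonneg hn0.le]
      · simpa using hn0.le
      · simpa using hn0.le
      · simp [abs_of_nonneg hn0.le]
      · have h1 : ((r1:ℕ):ℝ) + 1 ≤ n := by exact_mod_cast hr1n
        have : (((r1:ℕ):ℝ)+1)*(n:ℝ) + (((r2:ℕ):ℝ)+1)*0 + (((r3:ℕ):ℝ)+1)*0
            = (((r1:ℕ):ℝ)+1) * n := by ring
        rw [this, abs_of_nonneg (by positivity)]
        exact mul_le_mul h1 le_rfl hn0.le hn0.le
    · by_cases hi1 : (i:ℕ) < n
      · rw [wv_coord _ _ _ _ _ _ _ i hi1]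
        rw [if_pos (h1i hi1).symm]
        simp [abs_of_nonneg hn0.le, hn1]
      · by_cases hi0 : (i:ℕ) = n
        · rw [wv_S _ _ _ _ _ _ _ i hi0]
          simp [abs_of_nonneg hn0.le, hn1]
        · rw [wv_T _ _ _ _ _ _ _ i (by omega)]
          have hne : ((n:ℝ)) ≠ 0 := hn0.ne'
          have hval : ((((r1:ℕ):ℝ)+1)*(n:ℝ) + (((r2:ℕ):ℝ)+1)*0 + (((r3:ℕ):ℝ)+1)*0) / n
              = ((r1:ℕ):ℝ) + 1 := by field_simp; ring
          rw [hval, abs_of_nonneg (by positivity)]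
          have : (0:ℝ) ≤ ((r1:ℕ):ℝ) := by positivity
          linarith
  · by_cases hl0 : (l:ℕ) = n
    · -- Case 2: constraints j,k coordinates, l = sum
      have hkn : (k:ℕ) < n := by omega
      have hin : (i:ℕ) ≠ n := by omega
      obtain ⟨r1, ⟨h1j, h1k⟩, h1i⟩ :
          ∃ r1 : Fin n, ((r1:ℕ) ≠ (j:ℕ) ∧ (r1:ℕ) ≠ (k:ℕ)) ∧ ((i:ℕ) < n → (r1:ℕ) = (i:ℕ)) := by
        by_cases hi1 : (i:ℕ) < n
        · exact ⟨⟨(i:ℕ), hi1⟩, ⟨hij', hik'⟩, fun _ => rfl⟩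
        · obtain ⟨r, ha, hb, -⟩ := exists_avoid n hn j k j
          exact ⟨r, ⟨ha, hb⟩, fun h' => absurd h' hi1⟩
      obtain ⟨r2, h2j, h2k, h21⟩ := exists_avoid n hn j k r1
      obtain ⟨r3, h31, h32, -⟩ := exists_avoid n hn r1 r2 r1
      have habs12 : |((r1:ℕ):ℝ) - ((r2:ℕ):ℝ)| ≤ n := abs_sub_le_of_lt r1.isLt r2.isLt
      refine ⟨wv n r1 r2 r3 (n:ℝ) (-(n:ℝ)) 0, ?_, ?_, ?_, ?_, ?_⟩
      · rw [wv_coord _ _ _ _ _ _ _ j hjn]; simp [Ne.symm h1j, Ne.symm h2j]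
      · rw [wv_coord _ _ _ _ _ _ _ k hkn]; simp [Ne.symm h1k, Ne.symm h2k]
      · rw [wv_S _ _ _ _ _ _ _ l hl0]; ring
      · apply wv_bound n hn r1 r2 r3 (Ne.symm h21) (Ne.symm h31) (Ne.symm h32)
        · rw [abs_of_nonneg hn0.le]
        · rw [abs_neg, abs_of_nonneg hn0.le]
        · simpa using hn0.le
        · simpa using hn0.le
        · have : (((r1:ℕ):ℝ)+1)*(n:ℝ) + (((r2:ℕ):ℝ)+1)*(-(n:ℝ)) + (((r3:ℕ):ℝ)+1)*0
              = (((r1:ℕ):ℝ) - ((r2:ℕ):ℝ)) * n := by ring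
          rw [this, abs_mul, abs_of_nonneg hn0.le]
          exact mul_le_mul habs12 le_rfl hn0.le hn0.le
      · by_cases hi1 : (i:ℕ) < n
        · rw [wv_coord _ _ _ _ _ _ _ i hi1]
          rw [if_pos (h1i hi1).symm, if_neg (fun h => h21 ((h1i hi1) ▸ h.symm)),
            if_neg (fun h => h31 ((h1i hi1) ▸ h.symm))]
          simp [abs_of_nonneg hn0.le, hn1]
        · rw [wv_T _ _ _ _ _ _ _ i (by omega)]
          have hval : ((((r1:ℕ):ℝ)+1)*(n:ℝ) + (((r2:ℕ):ℝ)+1)*(-(n:ℝ)) + (((r3:ℕ):ℝ)+1)*0) / n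
              = ((r1:ℕ):ℝ) - ((r2:ℕ):ℝ) := by field_simp; ring
          rw [hval]
          exact one_le_abs_sub _ _ (fun h => h21 h.symm)
    · by_cases hk0 : (k:ℕ) = n
      · -- Case 4: j coordinate, k = sum, l = weighted sum
        have hl4 : (l:ℕ) = n + 1 := by omega
        have hi1 : (i:ℕ) < n := by omega
        obtain ⟨r2, h2i, h2j, -⟩ := exists_avoid n hn i j i
        obtain ⟨r3, h3i, h3j, h32⟩ := exists_avoid n hn i j r2
        set r1 : Fin n := ⟨(i:ℕ), hi1⟩ with hr1def
        have hr1 : (r1:ℕ) = (i:ℕ) := rfl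
        set c1 : ℝ := ((r3:ℕ):ℝ) - ((r2:ℕ):ℝ) with hc1
        set c2 : ℝ := ((i:ℕ):ℝ) - ((r3:ℕ):ℝ) with hc2
        set c3 : ℝ := ((r2:ℕ):ℝ) - ((i:ℕ):ℝ) with hc3
        refine ⟨wv n r1 r2 r3 c1 c2 c3, ?_, ?_, ?_, ?_, ?_⟩
        · rw [wv_coord _ _ _ _ _ _ _ j hjn]
          rw [if_neg (by rw [hr1]; exact Ne.symm hij'), if_neg (Ne.symm h2j), if_neg (Ne.symm h3j)]
          ring
        · rw [wv_S _ _ _ _ _ _ _ k hk0, hc1, hc2, hc3]; ring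
        · rw [wv_T _ _ _ _ _ _ _ l hl4, hr1, hc1, hc2, hc3]
          have : (((i:ℕ):ℝ)+1)*(((r3:ℕ):ℝ) - ((r2:ℕ):ℝ)) +
              (((r2:ℕ):ℝ)+1)*(((i:ℕ):ℝ) - ((r3:ℕ):ℝ)) +
              (((r3:ℕ):ℝ)+1)*(((r2:ℕ):ℝ) - ((i:ℕ):ℝ)) = 0 := by ring
          rw [this, zero_div]
        · apply wv_bound n hn r1 r2 r3 (by rw [hr1]; exact h2i.symm) (by rw [hr1]; exact h3i.symm)
            (Ne.symm h32)
          · exact abs_sub_le_of_lt r3.isLt r2.isLt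
          · exact abs_sub_le_of_lt hi1 r3.isLt
          · exact abs_sub_le_of_lt r2.isLt hi1
          · have : c1 + c2 + c3 = 0 := by rw [hc1, hc2, hc3]; ring
            rw [this, abs_zero]; exact hn0.le
          · rw [hr1]
            have : (((i:ℕ):ℝ)+1)*c1 + (((r2:ℕ):ℝ)+1)*c2 + (((r3:ℕ):ℝ)+1)*c3 = 0 := by
              rw [hc1, hc2, hc3]; ring
            rw [this, abs_zero]; positivity
        · rw [wv_coord _ _ _ _ _ _ _ i hi1]
          rw [if_pos hr1.symm, if_neg (Ne.symm h2i), if_neg (Ne.symm h3i), add_zero, add_zero]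
          exact one_le_abs_sub _ _ h32
      · -- Case 3: j,k coordinates, l = weighted sum
        have hl3 : (l:ℕ) = n + 1 := by omega
        have hkn : (k:ℕ) < n := by omega
        have hin : (i:ℕ) ≠ n + 1 := by omega
        obtain ⟨r1, ⟨h1j, h1k⟩, h1i⟩ :
            ∃ r1 : Fin n, ((r1:ℕ) ≠ (j:ℕ) ∧ (r1:ℕ) ≠ (k:ℕ)) ∧ ((i:ℕ) < n → (r1:ℕ) = (i:ℕ)) := by
          by_cases hi1 : (i:ℕ) < n
          · exact ⟨⟨(i:ℕ), hi1⟩, ⟨hij', hik'⟩, fun _ => rfl⟩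
          · obtain ⟨r, ha, hb, -⟩ := exists_avoid n hn j k j
            exact ⟨r, ⟨ha, hb⟩, fun h' => absurd h' hi1⟩
        obtain ⟨r2, h2j, h2k, h21⟩ := exists_avoid n hn j k r1
        obtain ⟨r3, h31, h32, -⟩ := exists_avoid n hn r1 r2 r1
        set c1 : ℝ := ((r2:ℕ):ℝ) + 1 with hc1
        set c2 : ℝ := -(((r1:ℕ):ℝ) + 1) with hc2
        have hb1 : |c1| ≤ n := by
          rw [hc1, abs_of_nonneg (by positivity)]
          exact_mod_cast r2.isLt
        have hb2 : |c2| ≤ n := by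
          rw [hc2, abs_neg, abs_of_nonneg (by positivity)]
          exact_mod_cast r1.isLt
        refine ⟨wv n r1 r2 r3 c1 c2 0, ?_, ?_, ?_, ?_, ?_⟩
        · rw [wv_coord _ _ _ _ _ _ _ j hjn]; simp [Ne.symm h1j, Ne.symm h2j]
        · rw [wv_coord _ _ _ _ _ _ _ k hkn]; simp [Ne.symm h1k, Ne.symm h2k]
        · rw [wv_T _ _ _ _ _ _ _ l hl3, hc1, hc2]
          have : (((r1:ℕ):ℝ)+1)*(((r2:ℕ):ℝ) + 1) + (((r2:ℕ):ℝ)+1)*(-(((r1:ℕ):ℝ) + 1)) +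
              (((r3:ℕ):ℝ)+1)*0 = 0 := by ring
          rw [this, zero_div]
        · apply wv_bound n hn r1 r2 r3 (Ne.symm h21) (Ne.symm h31) (Ne.symm h32)
          · exact hb1
          · exact hb2
          · simpa using hn0.le
          · have : c1 + c2 + 0 = ((r2:ℕ):ℝ) - ((r1:ℕ):ℝ) := by rw [hc1, hc2]; ring
            rw [this]
            exact abs_sub_le_of_lt r2.isLt r1.isLt
          · have : (((r1:ℕ):ℝ)+1)*c1 + (((r2:ℕ):ℝ)+1)*c2 + (((r3:ℕ):ℝ)+1)*0 = 0 := by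
              rw [hc1, hc2]; ring
            rw [this, abs_zero]; positivity
        · by_cases hi1 : (i:ℕ) < n
          · rw [wv_coord _ _ _ _ _ _ _ i hi1]
            rw [if_pos (h1i hi1).symm, if_neg (fun h => h21 ((h1i hi1) ▸ h.symm)),
              if_neg (fun h => h31 ((h1i hi1) ▸ h.symm))]
            rw [add_zero, add_zero, hc1, abs_of_nonneg (by positivity)]
            have : (0:ℝ) ≤ ((r2:ℕ):ℝ) := by positivity
            linarith
          · rw [wv_S _ _ _ _ _ _ _ i (by omega)]
            have : c1 + c2 + 0 = ((r2:ℕ):ℝ) - ((r1:ℕ):ℝ) := by rw [hc1, hc2]; ring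
            rw [this]
            exact one_le_abs_sub _ _ (fun h => h21 h)

lemma unit_ball_bound (n : ℕ) (hn : 4 ≤ n) (y : Fin n → ℝ)
    (hy : cornerNorm n y ≤ 1) (t : Fin (n+2)) : |cornerFunctional n t y| ≤ 1 := by
  set m := 2 * ((n + 3) / 2) with hm
  have hm0 : m ≠ 0 := by omega
  set S := ∑ s, |cornerFunctional n s y| ^ m with hS
  have hS0 : 0 ≤ S := Finset.sum_nonneg fun s _ => by positivity
  have hS1 : S ≤ 1 := by
    by_contra hc
    push_neg at hc
    have h1 : 1 < S ^ ((1:ℝ) / m) := by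
      rw [Real.one_lt_rpow_iff_of_pos (by linarith)]
      left
      constructor
      · exact hc
      · positivity
    have : 1 < cornerNorm n y := by
      rw [cornerNorm]
      convert h1 using 3
      push_cast
      ring_nf
      push_cast
      rw [hm, add_comm 3 n, Nat.cast_mul, Nat.cast_ofNat, mul_comm]
    linarith
  have hterm : |cornerFunctional n t y| ^ m ≤ S :=
    Finset.single_le_sum (f := fun s => |cornerFunctional n s y| ^ m)
      (fun s _ => by positivity) (Finset.mem_univ t)
  have := le_trans hterm hS1
  exact (pow_le_one_iff_of_nonneg (abs_nonneg _) hm0).mp this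

/-- The dual-norm distance from `fᵢ` to the span of any three other functionals of the
system is at least `1/(2n)`: for all coefficients `a, b, c`, the dual norm of
`fᵢ - (a f_j + b f_k + c f_l)` is at least `1/(2n)`. -/
theorem cornerFunctional_dual_distance
    (n : ℕ) (hn : 4 ≤ n) (j k l i : Fin (n + 2))
    (hjk : j < k) (hkl : k < l) (hij : i ≠ j) (hik : i ≠ k) (hil : i ≠ l) :
    ∀ a b c : ℝ,
      1 / (2 * (n : ℝ)) ≤
        sSup {t : ℝ | ∃ x : Fin n → ℝ, cornerNorm n x ≤ 1 ∧
          t = |cornerFunctional n i x -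
              (a * cornerFunctional n j x + b * cornerFunctional n k x +
                c * cornerFunctional n l x)|} := by
  intro a b c
  obtain ⟨v, hvj, hvk, hvl, hvb, hvi⟩ := witness n hn j k l i hjk hkl hij hik hil
  have hn0 : (0:ℝ) < n := by positivity
  have hn2 : (0:ℝ) < 2 * n := by positivity
  set m := 2 * ((n + 3) / 2) with hm
  have hmn : n + 2 ≤ m := by omega
  have hm0 : m ≠ 0 := by omega
  set x : Fin n → ℝ := fun s => (1 / (2 * (n:ℝ))) * v s with hx
  have hfx : ∀ t, cornerFunctional n t x = (1 / (2 * (n:ℝ))) * cornerFunctional n t v :=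
    fun t => cornerFunctional_smul n t _ v
  have hcoef : (0:ℝ) < 1 / (2 * (n:ℝ)) := by positivity
  have hxb : ∀ t, |cornerFunctional n t x| ≤ 1 / 2 := by
    intro t
    rw [hfx t, abs_mul, abs_of_nonneg hcoef.le]
    have h1 := hvb t
    have h2 : 1 / (2 * (n:ℝ)) * |cornerFunctional n t v| ≤ 1 / (2 * (n:ℝ)) * n :=
      mul_le_mul_of_nonneg_left h1 hcoef.le
    have h3 : 1 / (2 * (n:ℝ)) * n = 1 / 2 := by field_simp
    linarith
  have hnorm : cornerNorm n x ≤ 1 := by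
    rw [cornerNorm]
    apply Real.rpow_le_one (Finset.sum_nonneg fun s _ => by positivity) _ (by positivity)
    calc ∑ s, |cornerFunctional n s x| ^ m
        ≤ ∑ _s : Fin (n+2), ((1:ℝ)/2) ^ m := by
          apply Finset.sum_le_sum
          intro s _
          exact pow_le_pow_left₀ (abs_nonneg _) (hxb s) m
      _ = ((n:ℝ) + 2) * ((1:ℝ)/2) ^ m := by
          rw [Finset.sum_const, Finset.card_univ, Fintype.card_fin]
          push_cast
          ring
      _ ≤ 1 := by
          rw [one_div, inv_pow, mul_inv_le_iff₀ (by positivity), one_mul]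
          calc ((n:ℝ) + 2) ≤ (2:ℝ) ^ (n + 2) := by
                have h := (Nat.lt_two_pow_self (n := n+2)).le
                exact_mod_cast h
            _ ≤ (2:ℝ) ^ m := pow_le_pow_right₀ one_le_two hmn
  apply le_csSup_of_le (b := |cornerFunctional n i x -
      (a * cornerFunctional n j x + b * cornerFunctional n k x +
        c * cornerFunctional n l x)|)
  · refine ⟨1 + |a| + |b| + |c|, ?_⟩
    rintro t ⟨y, hy, rfl⟩
    have hb := fun s => unit_ball_bound n hn y hy s
    calc |cornerFunctional n i y -
          (a * cornerFunctional n j y + b * cornerFunctional n k y +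
            c * cornerFunctional n l y)|
        ≤ |cornerFunctional n i y| +
          |a * cornerFunctional n j y + b * cornerFunctional n k y +
            c * cornerFunctional n l y| := abs_sub _ _
      _ ≤ |cornerFunctional n i y| +
          (|a * cornerFunctional n j y| + |b * cornerFunctional n k y| +
            |c * cornerFunctional n l y|) := by
          gcongr
          exact (abs_add_le _ _).trans (by gcongr; exact abs_add_le _ _)
      _ ≤ 1 + (|a| * 1 + |b| * 1 + |c| * 1) := by
          rw [abs_mul, abs_mul, abs_mul]
          gcongr <;> [exact hb i; exact hb j; exact hb k; exact hb l]
      _ = 1 + |a| + |b| + |c| := by ring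
  · exact ⟨x, hnorm, rfl⟩
  · have hzj : cornerFunctional n j x = 0 := by rw [hfx j, hvj, mul_zero]
    have hzk : cornerFunctional n k x = 0 := by rw [hfx k, hvk, mul_zero]
    have hzl : cornerFunctional n l x = 0 := by rw [hfx l, hvl, mul_zero]
    rw [hzj, hzk, hzl, mul_zero, mul_zero, mul_zero, add_zero, add_zero, sub_zero,
      hfx i, abs_mul, abs_of_nonneg hcoef.le]
    calc 1 / (2 * (n:ℝ)) = 1 / (2 * (n:ℝ)) * 1 := by ring
      _ ≤ 1 / (2 * (n:ℝ)) * |cornerFunctional n i v| :=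
          mul_le_mul_of_nonneg_left hvi hcoef.le
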